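/- Let n be a positive integer and (x, y, z) a positive integral solution of x^n - y^n = z^{n+1}. Let d = gcd(x, y, z) and (a, b, c) = (x/d, y/d, z/d). Then (a, b, c) is a relatively prime n-powerful triple with t_n(a, b, c) = d, and (x, y, z) = (a·d, b·d, c·d). -/

import Mathlib

theorem stmt_7 (n x y z : ℕ) (hn : 0 < n) (hx : 0 < x) (hy : 0 < y) (hz : 0 < z)
    (h : x ^ n - y ^ n = z ^ (n + 1))
    (d a b c : ℕ) (hd : d = Nat.gcd x (Nat.gcd y z))
    (hab : a = x / d) (hbb : b = y / d) (hcb : c = z / d) :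
    0 < a ∧ 0 < b ∧ 0 < c ∧ b < a ∧ c ^ (n + 1) ∣ a ^ n - b ^ n ∧
    Nat.gcd a (Nat.gcd b c) = 1 ∧ (a ^ n - b ^ n) / c ^ (n + 1) = d ∧
    x = a * d ∧ y = b * d ∧ z = c * d := by
  have hdx : d ∣ x := hd ▸ Nat.gcd_dvd_left _ _
  have hdy : d ∣ y := hd ▸ (Nat.gcd_dvd_right x _).trans (Nat.gcd_dvd_left y z)
  have hdz : d ∣ z := hd ▸ (Nat.gcd_dvd_right x _).trans (Nat.gcd_dvd_right y z)
  have hd0 : 0 < d := hd ▸ Nat.gcd_pos_of_pos_left _ hx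
  have hxad : x = a * d := by rw [hab, Nat.div_mul_cancel hdx]
  have hybd : y = b * d := by rw [hbb, Nat.div_mul_cancel hdy]
  have hzcd : z = c * d := by rw [hcb, Nat.div_mul_cancel hdz]
  have ha : 0 < a := by
    rcases Nat.eq_zero_or_pos a with h0 | h0
    · simp [hxad, h0] at hx
    · exact h0
  have hb : 0 < b := by
    rcases Nat.eq_zero_or_pos b with h0 | h0
    · simp [hybd, h0] at hy
    · exact h0
  have hc : 0 < c := by
    rcases Nat.eq_zero_or_pos c with h0 | h0
    · simp [hzcd, h0] at hz
    · exact h0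
  have hyx : y < x := by
    have hpow : y ^ n < x ^ n := by
      have : 0 < x ^ n - y ^ n := h ▸ pow_pos hz _
      omega
    exact (Nat.pow_lt_pow_iff_left hn.ne').mp hpow
  have hba : b < a := by
    have : b * d < a * d := by rw [← hxad, ← hybd]; exact hyx
    exact Nat.lt_of_mul_lt_mul_right this
  have key : a ^ n - b ^ n = c ^ (n + 1) * d := by
    have h1 : (a ^ n - b ^ n) * d ^ n = c ^ (n + 1) * d * d ^ n := by
      rw [Nat.sub_mul]
      have hx' : x ^ n = a ^ n * d ^ n := by rw [hxad, mul_pow]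
      have hy' : y ^ n = b ^ n * d ^ n := by rw [hybd, mul_pow]
      rw [← hx', ← hy', h, hzcd, mul_pow, pow_succ]
      ring
    exact Nat.eq_of_mul_eq_mul_right (pow_pos hd0 _) h1
  have hgcd : Nat.gcd a (Nat.gcd b c) = 1 := by
    rw [hab, hbb, hcb, Nat.gcd_div hdy hdz, Nat.gcd_div hdx (hd ▸ Nat.gcd_dvd_right x _),
      ← hd, Nat.div_self hd0]
  refine ⟨ha, hb, hc, hba, ⟨d, key⟩, hgcd, ?_, hxad, hybd, hzcd⟩
  rw [key, Nat.mul_div_cancel_left _ (pow_pos hc _)]
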